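/- Let g ≥ 2 be a natural number. For each natural number n, define P_n(t) ∈ ℚ[t] as the coefficient of x^n in the formal power series (1+xt)^{2g}/((1−x)(1−xt²)), viewed as a power series in x with coefficients in ℚ[t]. Set G(t) = ((1+t³)^{2g} − t^{2g}(1+t)^{2g}) + (1−t²)(1−t⁴) · ∑_{d=1}^{g−1} t^{2g+4d−4} · P_{2g−2d−1}(t) ∈ ℚ[t]. Then (1+t³)^{2g} − G(t) is divisible by t^{4g−2} in ℚ[t]. -/

import Mathlib

open Polynomial PowerSeries Finset

/-- Macdonald's Poincaré polynomial of the `n`-th symmetric product of a genus-`g` curve: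
the coefficient of `x^n` in `(1+xt)^{2g}/((1−x)(1−xt²))`,
viewed as a power series in `x` with coefficients in `ℚ[t]`. -/
noncomputable def macdonaldPoly (g n : ℕ) : ℚ[X] :=
  PowerSeries.coeff (R := ℚ[X]) n
    ((1 + PowerSeries.C (R := ℚ[X]) Polynomial.X * PowerSeries.X) ^ (2 * g)
      * PowerSeries.mk (fun _ => (1 : ℚ[X]))
      * PowerSeries.mk (fun m => (Polynomial.X : ℚ[X]) ^ (2 * m)))


lemma coeff_A (g j : ℕ) :
    PowerSeries.coeff (R := ℚ[X]) j ((1 + PowerSeries.C (R := ℚ[X]) Polynomial.X * PowerSeries.X) ^ (2 * g))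
      = ((2 * g).choose j : ℚ[X]) * Polynomial.X ^ j := by
  rw [add_comm, add_pow, map_sum]
  rw [Finset.sum_congr rfl (g := fun k => if k = j then ((2 * g).choose j : ℚ[X]) * Polynomial.X ^ j else 0)
    (fun k _ => by
      rw [one_pow, mul_one, mul_pow, ← map_pow,
        show ((2*g).choose k : ℚ[X]⟦X⟧) = PowerSeries.C (R := ℚ[X]) ((2*g).choose k : ℚ[X]) by
          rw [map_natCast],
        PowerSeries.coeff_mul_C, PowerSeries.coeff_C_mul, PowerSeries.coeff_X_pow]
      by_cases h : j = k
      · subst h; simp [mul_comm]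
      · simp [h, Ne.symm h])]
  rw [Finset.sum_ite_eq' (Finset.range (2*g+1)) j]
  split_ifs with h
  · rfl
  · have : (2*g).choose j = 0 := Nat.choose_eq_zero_of_lt (by simpa using h)
    simp [this]

lemma coeff_BC (b : ℕ) :
    PowerSeries.coeff (R := ℚ[X]) b
      (PowerSeries.mk (fun _ => (1 : ℚ[X])) * PowerSeries.mk (fun m => (Polynomial.X : ℚ[X]) ^ (2 * m)))
      = ∑ m ∈ Finset.range (b + 1), (Polynomial.X : ℚ[X]) ^ (2 * m) := by
  rw [PowerSeries.coeff_mul, Finset.Nat.sum_antidiagonal_eq_sum_range_succ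
    (f := fun i j => PowerSeries.coeff (R := ℚ[X]) i (PowerSeries.mk (fun _ => (1:ℚ[X]))) *
      PowerSeries.coeff (R := ℚ[X]) j (PowerSeries.mk (fun m => (Polynomial.X:ℚ[X]) ^ (2*m))))]
  simp only [PowerSeries.coeff_mk, one_mul]
  exact Finset.sum_range_reflect (fun m => (Polynomial.X : ℚ[X]) ^ (2 * m)) (b+1)

lemma macdonald_eq (g n : ℕ) :
    (PowerSeries.coeff (R := ℚ[X]) n
    ((1 + PowerSeries.C (R := ℚ[X]) Polynomial.X * PowerSeries.X) ^ (2 * g)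
      * PowerSeries.mk (fun _ => (1 : ℚ[X]))
      * PowerSeries.mk (fun m => (Polynomial.X : ℚ[X]) ^ (2 * m))))
    = ∑ i ∈ Finset.range (n + 1), ((2 * g).choose i : ℚ[X]) * Polynomial.X ^ i *
        ∑ m ∈ Finset.range (n - i + 1), (Polynomial.X : ℚ[X]) ^ (2 * m) := by
  rw [mul_assoc, PowerSeries.coeff_mul, Finset.Nat.sum_antidiagonal_eq_sum_range_succ
    (f := fun i j => PowerSeries.coeff (R := ℚ[X]) i _ * PowerSeries.coeff (R := ℚ[X]) j _)]
  exact Finset.sum_congr rfl fun i _ => by rw [coeff_A, coeff_BC]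

lemma geom_trunc (N : ℕ) :
    (1 - Polynomial.X ^ 2 : ℚ[X]) * ∑ m ∈ Finset.range (N + 1), (Polynomial.X : ℚ[X]) ^ (2 * m)
      = 1 - Polynomial.X ^ (2 * (N + 1)) := by
  have h := geom_sum_mul (Polynomial.X ^ 2 : ℚ[X]) (N + 1)
  simp only [← pow_mul] at h
  have : ∀ m, (Polynomial.X : ℚ[X]) ^ (2 * m) = Polynomial.X ^ (m * 2) := fun m => by ring
  calc (1 - Polynomial.X ^ 2 : ℚ[X]) * ∑ m ∈ Finset.range (N + 1), (Polynomial.X : ℚ[X]) ^ (2 * m)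
      = -((∑ m ∈ Finset.range (N + 1), (Polynomial.X : ℚ[X]) ^ (2 * m)) * (Polynomial.X ^ 2 - 1)) := by
        ring
    _ = 1 - Polynomial.X ^ (2 * (N + 1)) := by rw [h]; ring

lemma binom_expand (g : ℕ) :
    ((1 + Polynomial.X : ℚ[X])) ^ (2 * g)
      = ∑ i ∈ Finset.range (2 * g + 1), ((2 * g).choose i : ℚ[X]) * Polynomial.X ^ i := by
  rw [add_comm, add_pow]
  exact Finset.sum_congr rfl fun i _ => by ring

lemma decomp (g n : ℕ) (hn : n ≤ 2 * g) :
    (1 - Polynomial.X ^ 2 : ℚ[X]) *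
      (∑ i ∈ Finset.range (n+1), ((2*g).choose i : ℚ[X]) * Polynomial.X ^ i *
        ∑ m ∈ Finset.range (n-i+1), (Polynomial.X : ℚ[X]) ^ (2*m))
    = (1 + Polynomial.X) ^ (2*g)
      - ∑ i ∈ Finset.Ico (n+1) (2*g+1), ((2*g).choose i : ℚ[X]) * Polynomial.X ^ i
      - ∑ i ∈ Finset.range (n+1), ((2*g).choose i : ℚ[X]) * Polynomial.X ^ (i + (2*(n-i)+2)) := by
  rw [Finset.mul_sum,
    Finset.sum_congr rfl (g := fun i => ((2*g).choose i : ℚ[X]) * Polynomial.X ^ i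
        - ((2*g).choose i : ℚ[X]) * Polynomial.X ^ (i + (2*(n-i)+2)))
      (fun i _ => by
        rw [show i + (2*(n-i)+2) = i + 2*((n-i)+1) by ring, pow_add]
        calc (1 - Polynomial.X ^ 2 : ℚ[X]) * (((2*g).choose i : ℚ[X]) * Polynomial.X ^ i *
              ∑ m ∈ Finset.range (n-i+1), (Polynomial.X : ℚ[X]) ^ (2*m))
            = ((2*g).choose i : ℚ[X]) * Polynomial.X ^ i *
              ((1 - Polynomial.X ^ 2) * ∑ m ∈ Finset.range (n-i+1), (Polynomial.X : ℚ[X]) ^ (2*m)) := by ring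
          _ = _ := by rw [geom_trunc (n-i)]; ring),
    Finset.sum_sub_distrib]
  have h1 : ∑ i ∈ Finset.range (n+1), ((2*g).choose i : ℚ[X]) * Polynomial.X ^ i
      = (1 + Polynomial.X) ^ (2*g)
        - ∑ i ∈ Finset.Ico (n+1) (2*g+1), ((2*g).choose i : ℚ[X]) * Polynomial.X ^ i := by
    rw [binom_expand g]
    simp only [Finset.range_eq_Ico]
    rw [← Finset.sum_Ico_consecutive _ (Nat.zero_le (n+1)) (by omega : n+1 ≤ 2*g+1)]
    ring
  rw [h1]

/-- With `G(t) = ((1+t³)^{2g} − t^{2g}(1+t)^{2g})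
  + (1−t²)(1−t⁴) · ∑_{d=1}^{g−1} t^{2g+4d−4} · P_{2g−2d−1}(t)`,
the difference `(1+t³)^{2g} − G(t)` is divisible by `t^{4g−2}` in `ℚ[t]`. -/
theorem higgs_poincare_approximates_BG (g : ℕ) (hg : 2 ≤ g) :
    (Polynomial.X : ℚ[X]) ^ (4 * g - 2) ∣
      ((1 + Polynomial.X ^ 3) ^ (2 * g) -
        (((1 + Polynomial.X ^ 3) ^ (2 * g)
            - Polynomial.X ^ (2 * g) * (1 + Polynomial.X) ^ (2 * g))
          + (1 - Polynomial.X ^ 2) * (1 - Polynomial.X ^ 4) *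
              ∑ d ∈ Finset.Icc 1 (g - 1),
                Polynomial.X ^ (2 * g + 4 * d - 4) * macdonaldPoly g (2 * g - 2 * d - 1))) := by
  -- the remainder part
  set R : ℕ → ℚ[X] := fun d =>
    (1 + Polynomial.X) ^ (2*g) - (1 - Polynomial.X ^ 2) * macdonaldPoly g (2*g - 2*d - 1) with hRdef
  -- divisibility of the remainder
  have hR : ∀ d ∈ Finset.Icc 1 (g-1), (Polynomial.X : ℚ[X]) ^ (2*g - 2*d) ∣ R d := by
    intro d hd
    simp only [Finset.mem_Icc] at hd
    have hn : 2*g - 2*d - 1 ≤ 2*g := by omega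
    have h1 : R d
        = (∑ i ∈ Finset.Ico (2*g-2*d-1+1) (2*g+1), ((2*g).choose i : ℚ[X]) * Polynomial.X ^ i)
        + ∑ i ∈ Finset.range (2*g-2*d-1+1), ((2*g).choose i : ℚ[X]) *
            Polynomial.X ^ (i + (2*((2*g-2*d-1)-i)+2)) := by
      rw [hRdef]
      dsimp only
      rw [macdonaldPoly, macdonald_eq, decomp g _ hn]
      ring
    rw [h1]
    refine dvd_add (Finset.dvd_sum fun i hi => ?_) (Finset.dvd_sum fun i hi => ?_)
    · simp only [Finset.mem_Ico] at hi
      exact Dvd.dvd.mul_left (pow_dvd_pow _ (by omega)) _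
    · simp only [Finset.mem_range] at hi
      exact Dvd.dvd.mul_left (pow_dvd_pow _ (by omega)) _
  -- telescoping sum
  have htel : (1 - Polynomial.X ^ 4 : ℚ[X]) *
      ∑ d ∈ Finset.Icc 1 (g-1), (Polynomial.X : ℚ[X]) ^ (2*g + 4*d - 4)
      = Polynomial.X ^ (2*g) - Polynomial.X ^ (2*g + 4*(g-1)) := by
    rw [show Finset.Icc 1 (g-1) = Finset.Ico 1 g by rw [← Finset.Ico_add_one_right_eq_Icc]; congr 1; omega,
      Finset.sum_Ico_eq_sum_range, Finset.mul_sum]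
    calc ∑ i ∈ Finset.range (g-1), (1 - Polynomial.X ^ 4 : ℚ[X]) * Polynomial.X ^ (2*g + 4*(1+i) - 4)
        = ∑ i ∈ Finset.range (g-1),
            ((Polynomial.X : ℚ[X]) ^ (2*g + 4*i) - Polynomial.X ^ (2*g + 4*(i+1))) := by
          refine Finset.sum_congr rfl fun i _ => ?_
          rw [show 2*g + 4*(1+i) - 4 = 2*g + 4*i from by omega,
            show 2*g + 4*(i+1) = (2*g + 4*i) + 4 from by ring, pow_add]
          ring
      _ = Polynomial.X ^ (2*g + 4*0) - Polynomial.X ^ (2*g + 4*(g-1)) :=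
          Finset.sum_range_sub' (fun i => (Polynomial.X : ℚ[X]) ^ (2*g + 4*i)) (g-1)
      _ = _ := by norm_num
  -- rewrite the sum
  have hS : (1 - Polynomial.X ^ 2 : ℚ[X]) * (1 - Polynomial.X ^ 4) *
      ∑ d ∈ Finset.Icc 1 (g - 1),
        Polynomial.X ^ (2 * g + 4 * d - 4) * macdonaldPoly g (2 * g - 2 * d - 1)
      = (Polynomial.X ^ (2*g) - Polynomial.X ^ (2*g + 4*(g-1))) * (1 + Polynomial.X) ^ (2*g)
        - (1 - Polynomial.X ^ 4) *
            ∑ d ∈ Finset.Icc 1 (g-1), Polynomial.X ^ (2*g + 4*d - 4) * R d := by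
    rw [← htel]
    rw [Finset.mul_sum, Finset.mul_sum, Finset.mul_sum, Finset.sum_mul,
      ← Finset.sum_sub_distrib]
    refine Finset.sum_congr rfl fun d _ => ?_
    rw [hRdef]
    ring
  rw [hS]
  have key : ((1 + Polynomial.X ^ 3 : ℚ[X]) ^ (2 * g) -
      (((1 + Polynomial.X ^ 3) ^ (2 * g)
          - Polynomial.X ^ (2 * g) * (1 + Polynomial.X) ^ (2 * g))
        + ((Polynomial.X ^ (2*g) - Polynomial.X ^ (2*g + 4*(g-1))) * (1 + Polynomial.X) ^ (2*g)
        - (1 - Polynomial.X ^ 4) *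
            ∑ d ∈ Finset.Icc 1 (g-1), Polynomial.X ^ (2*g + 4*d - 4) * R d)))
      = Polynomial.X ^ (2*g + 4*(g-1)) * (1 + Polynomial.X) ^ (2*g)
        + (1 - Polynomial.X ^ 4) *
            ∑ d ∈ Finset.Icc 1 (g-1), Polynomial.X ^ (2*g + 4*d - 4) * R d := by
    ring
  rw [key]
  refine dvd_add (Dvd.dvd.mul_right (pow_dvd_pow _ (by omega)) _)
    (Dvd.dvd.mul_left (Finset.dvd_sum fun d hd => ?_) _)
  obtain ⟨q, hq⟩ := hR d hd
  simp only [Finset.mem_Icc] at hd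
  rw [hq, ← mul_assoc, ← pow_add]
  exact Dvd.dvd.mul_right (pow_dvd_pow _ (by omega)) q
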